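/- arXiv:1912.09900 — 2 statements merged into one kernel-verified Lean document; each statement's English description precedes it below -/
import Mathlib

section
/- Let $T = \mathrm{diag}(T_1, T_2, T_3)$ be an invertible diagonal $3\times 3$ real matrix and let $\hat{B}_0, \hat{B}_1, \hat{B}_2 \in \mathbb{R}^3$ be linearly independent. For $(x_0,x_1,x_2) \in \{0,1\}^3$, let $v_x = T^{-1}[(-1)^{x_0}\hat{B}_1\times\hat{B}_2 + (-1)^{x_1}\hat{B}_2\times\hat{B}_0 + (-1)^{x_2}\hat{B}_0\times\hat{B}_1]$ and $\hat{A}_x = v_x/\|v_x\|$. Then $\hat{A}_x \cdot ((-1)^{x_0} T\hat{B}_0) = \hat{A}_x \cdot ((-1)^{x_1} T\hat{B}_1) = \hat{A}_x \cdot ((-1)^{x_2} T\hat{B}_2)$. -/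
open scoped RealInnerProductSpace
open Finset

noncomputable section

abbrev E3 := EuclideanSpace ℝ (Fin 3)

/-- Componentwise action of the diagonal matrix `diag (T 0, T 1, T 2)`. -/
def diagMul (T : Fin 3 → ℝ) (v : E3) : E3 := WithLp.toLp 2 (fun i => T i * v i)

/-- Componentwise action of the inverse diagonal matrix `diag (T 0, T 1, T 2)⁻¹`. -/
def diagInv (T : Fin 3 → ℝ) (v : E3) : E3 := WithLp.toLp 2 (fun i => (T i)⁻¹ * v i)

/-- The sign `(-1)^x` for a bit `x ∈ {0,1}` encoded as a `Bool`. -/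
def sgn (x : Bool) : ℝ := if x then -1 else 1

open Matrix
lemma sgn_mul_sgn (b : Bool) : sgn b * sgn b = 1 := by cases b <;> simp [sgn]

lemma inner_diagInv_diagMul (T : Fin 3 → ℝ) (hT : ∀ i, T i ≠ 0) (w u : E3) :
    ⟪(diagInv T w : E3), diagMul T u⟫ = w ⬝ᵥ u := by
  simp only [PiLp.inner_apply, RCLike.inner_apply, conj_trivial, diagInv, diagMul,
    dotProduct, WithLp.ofLp_toLp, Fin.sum_univ_three]
  have h0 := hT 0; have h1 := hT 1; have h2 := hT 2
  field_simp

theorem stmt_6 (T : Fin 3 → ℝ) (hT : ∀ i, T i ≠ 0) (B : Fin 3 → E3)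
    (hB : LinearIndependent ℝ B) (x : Fin 3 → Bool) :
    let v : E3 := diagInv T (WithLp.toLp 2 (sgn (x 0) • crossProduct (B 1) (B 2)
      + sgn (x 1) • crossProduct (B 2) (B 0) + sgn (x 2) • crossProduct (B 0) (B 1)))
    let A : E3 := ‖v‖⁻¹ • v
    ⟪A, sgn (x 0) • diagMul T (B 0)⟫ = ⟪A, sgn (x 1) • diagMul T (B 1)⟫ ∧
      ⟪A, sgn (x 1) • diagMul T (B 1)⟫ = ⟪A, sgn (x 2) • diagMul T (B 2)⟫ := by
  intro v A
  set w : E3 := WithLp.toLp 2 (sgn (x 0) • crossProduct (B 1) (B 2)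
      + sgn (x 1) • crossProduct (B 2) (B 0) + sgn (x 2) • crossProduct (B 0) (B 1)) with hw
  set D : ℝ := B 0 ⬝ᵥ crossProduct (B 1) (B 2) with hD
  have key : ∀ i : Fin 3, w ⬝ᵥ B i = sgn (x i) * D := by
    intro i
    have p1 : B 0 ⬝ᵥ crossProduct (B 1) (B 2) = B 1 ⬝ᵥ crossProduct (B 2) (B 0) :=
      triple_product_permutation _ _ _
    have p2 : B 1 ⬝ᵥ crossProduct (B 2) (B 0) = B 2 ⬝ᵥ crossProduct (B 0) (B 1) :=
      triple_product_permutation _ _ _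
    have perm01 : B 1 ⬝ᵥ crossProduct (B 2) (B 0) = D := (hD.trans p1).symm
    have perm02 : B 2 ⬝ᵥ crossProduct (B 0) (B 1) = D := (hD.trans (p1.trans p2)).symm
    fin_cases i
    · show w ⬝ᵥ B 0 = sgn (x 0) * D
      rw [hw, dotProduct_comm]
      simp only [WithLp.ofLp_toLp, dotProduct_add, dotProduct_smul, dot_cross_self,
        dot_self_cross, ← hD, smul_eq_mul, mul_zero, add_zero, zero_add]
    · show w ⬝ᵥ B 1 = sgn (x 1) * D
      rw [hw, dotProduct_comm]
      simp only [WithLp.ofLp_toLp, dotProduct_add, dotProduct_smul, dot_cross_self,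
        dot_self_cross, perm01, smul_eq_mul, mul_zero, add_zero, zero_add]
    · show w ⬝ᵥ B 2 = sgn (x 2) * D
      rw [hw, dotProduct_comm]
      simp only [WithLp.ofLp_toLp, dotProduct_add, dotProduct_smul, dot_cross_self,
        dot_self_cross, perm02, smul_eq_mul, mul_zero, add_zero, zero_add]
  have main : ∀ i : Fin 3, ⟪A, sgn (x i) • diagMul T (B i)⟫ = ‖v‖⁻¹ * D := by
    intro i
    rw [real_inner_smul_right, real_inner_smul_left]
    show sgn (x i) * (‖v‖⁻¹ * ⟪(diagInv T w : E3), diagMul T (B i)⟫) = ‖v‖⁻¹ * D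
    rw [inner_diagInv_diagMul T hT, key i]
    calc sgn (x i) * (‖v‖⁻¹ * (sgn (x i) * D))
        = ‖v‖⁻¹ * (sgn (x i) * sgn (x i) * D) := by ring
      _ = ‖v‖⁻¹ * D := by rw [sgn_mul_sgn, one_mul]
  exact ⟨(main 0).trans (main 1).symm, (main 1).trans (main 2).symm⟩
end
end

section
/- Let $T = \mathrm{diag}(T_1,T_2,T_3)$ with $0 < |T_3| \le |T_2| \le |T_1|$. Choosing the orthonormal pair $\hat{B}_0 = \frac{1}{\sqrt{2}}(0,1,1)$, $\hat{B}_1 = \frac{1}{\sqrt{2}}(0,1,-1)$, one has $\max_{(x_0,x_1)\in\{0,1\}^2}\|T^{-1}[(-1)^{x_0}\hat{B}_0+(-1)^{x_1}\hat{B}_1]\| = \frac{\sqrt{2}}{|T_3|}$. -/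
open scoped RealInnerProductSpace
open Finset

noncomputable section

lemma key (T : Fin 3 → ℝ) (a b : ℝ) :
    ‖diagInv T (a • ((Real.sqrt 2)⁻¹ • (WithLp.toLp 2 (![0, 1, 1] : Fin 3 → ℝ) : E3))
          + b • ((Real.sqrt 2)⁻¹ • (WithLp.toLp 2 (![0, 1, -1] : Fin 3 → ℝ) : E3)))‖
    = Real.sqrt (((T 1)⁻¹*((a+b)*(Real.sqrt 2)⁻¹))^2 + ((T 2)⁻¹*((a-b)*(Real.sqrt 2)⁻¹))^2) := by
  rw [EuclideanSpace.norm_eq]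
  congr 1
  simp [diagInv, Fin.sum_univ_three]
  rw [← abs_inv (T 1), ← abs_inv (T 2), ← abs_mul, ← abs_mul, sq_abs, sq_abs]
  ring

lemma h2s : (2:ℝ) * (Real.sqrt 2)⁻¹ = Real.sqrt 2 := by
  have h : Real.sqrt 2 * Real.sqrt 2 = 2 := Real.mul_self_sqrt (by norm_num)
  field_simp
  rw [Real.sq_sqrt (by norm_num)]

lemma norm_val (T : Fin 3 → ℝ) (x : Bool × Bool) :
    ‖diagInv T (sgn x.1 • ((Real.sqrt 2)⁻¹ • (WithLp.toLp 2 (![0, 1, 1] : Fin 3 → ℝ) : E3))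
          + sgn x.2 • ((Real.sqrt 2)⁻¹ • (WithLp.toLp 2 (![0, 1, -1] : Fin 3 → ℝ) : E3)))‖
    = if x.1 = x.2 then Real.sqrt 2 / |T 1| else Real.sqrt 2 / |T 2| := by
  obtain ⟨x0, x1⟩ := x
  rw [key]
  have hs := Real.sqrt_nonneg 2
  cases x0 <;> cases x1 <;>
    simp [sgn] <;>
    rw [Real.sqrt_sq_eq_abs, abs_mul, abs_inv, abs_mul, abs_inv,
      abs_of_nonneg hs, div_eq_inv_mul] <;>
    norm_num [h2s]

theorem stmt_16 (T : Fin 3 → ℝ) (h3 : 0 < |T 2|) (h32 : |T 2| ≤ |T 1|) (h21 : |T 1| ≤ |T 0|) :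
    (Finset.univ.sup' Finset.univ_nonempty fun x : Bool × Bool =>
        ‖diagInv T (sgn x.1 • ((Real.sqrt 2)⁻¹ • (WithLp.toLp 2 (![0, 1, 1] : Fin 3 → ℝ) : E3))
          + sgn x.2 • ((Real.sqrt 2)⁻¹ • (WithLp.toLp 2 (![0, 1, -1] : Fin 3 → ℝ) : E3)))‖)
      = Real.sqrt 2 / |T 2| := by
  have hle : Real.sqrt 2 / |T 1| ≤ Real.sqrt 2 / |T 2| :=
    div_le_div_of_nonneg_left (Real.sqrt_nonneg 2) h3 h32
  apply le_antisymm
  · apply Finset.sup'_le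
    intro x _
    rw [norm_val]
    split <;> [exact hle; exact le_rfl]
  · have h := Finset.le_sup' (b := ((false, true) : Bool × Bool))
      (fun x : Bool × Bool =>
        ‖diagInv T (sgn x.1 • ((Real.sqrt 2)⁻¹ • (WithLp.toLp 2 (![0, 1, 1] : Fin 3 → ℝ) : E3))
          + sgn x.2 • ((Real.sqrt 2)⁻¹ • (WithLp.toLp 2 (![0, 1, -1] : Fin 3 → ℝ) : E3)))‖)
      (Finset.mem_univ _)
    rw [norm_val] at h
    simp only [Bool.false_eq_true, if_false] at h
    exact h
end
end
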